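/- Let θ ∈ ℝ and let Θ ∈ ℂ^N be a row vector with Θ̄·Θ = 1. Then the matrix exponential of ⟦θΘ⟧ ∈ su(N+1) is given in block form by exp(⟦θΘ⟧) = [[cos θ, (sin θ)Θ],[−(sin θ)Θ̄ᵀ, I_N + (cos θ − 1)Θ̄ᵀΘ]], an element of SU(N+1). -/

import Mathlib

open Matrix

/-- The embedding of a row vector `a ∈ ℂ^N` as the su(N+1) matrix
`⟦a⟧ = [[0, a],[−āᵀ, 0]]`. -/
noncomputable def mE {N : ℕ} (a : Fin N → ℂ) :
    Matrix (Fin 1 ⊕ Fin N) (Fin 1 ⊕ Fin N) ℂ :=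
  Matrix.fromBlocks 0 (Matrix.of fun _ j => a j)
    (Matrix.of fun i _ => -(starRingEnd ℂ) (a i)) 0

/-- The Hermitian dot product `ā·b = Σ_k ā_k b_k` on `ℂ^N`. -/
noncomputable def dotc {N : ℕ} (a b : Fin N → ℂ) : ℂ :=
  ∑ k, (starRingEnd ℂ) (a k) * b k

section aux

variable {N : ℕ} {Θ : Fin N → ℂ}

lemma mE_real_smul (θ : ℝ) (Θ : Fin N → ℂ) : mE (θ • Θ) = θ • mE Θ := by
  ext (i | i) (j | j) <;>
    simp [mE, Matrix.fromBlocks, Complex.real_smul, mul_comm]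

lemma mE_sq (hΘ : dotc Θ Θ = 1) :
    (mE Θ) ^ 2 = Matrix.fromBlocks (-1) 0 0
      (Matrix.of fun j k => -((starRingEnd ℂ) (Θ j) * Θ k)) := by
  have h : ∑ k, Θ k * (starRingEnd ℂ) (Θ k) = 1 := by
    rw [← hΘ, dotc]; exact Finset.sum_congr rfl fun k _ => mul_comm _ _
  ext (i | i) (j | j) <;>
    simp [pow_two, mE, Matrix.mul_apply, Matrix.fromBlocks, Fintype.sum_sum_type,
      Matrix.one_apply, Fin.ext_iff, ← Finset.sum_neg_distrib, h]
  rw [Finset.sum_neg_distrib, h]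

lemma dot_comm' (hΘ : dotc Θ Θ = 1) : ∑ k, Θ k * (starRingEnd ℂ) (Θ k) = 1 := by
  rw [← hΘ, dotc]; exact Finset.sum_congr rfl fun k _ => mul_comm _ _

lemma mE_cube (hΘ : dotc Θ Θ = 1) : (mE Θ) ^ 3 = -(mE Θ) := by
  have h1 := dot_comm' hΘ
  have h : ∀ j, ∑ k, -((starRingEnd ℂ) (Θ j) * Θ k) * -((starRingEnd ℂ) (Θ k)) =
      (starRingEnd ℂ) (Θ j) := by
    intro j
    have e : ∑ k, -((starRingEnd ℂ) (Θ j) * Θ k) * -((starRingEnd ℂ) (Θ k))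
        = (starRingEnd ℂ) (Θ j) * ∑ k, Θ k * (starRingEnd ℂ) (Θ k) := by
      rw [Finset.mul_sum]; exact Finset.sum_congr rfl fun k _ => by ring
    rw [e, h1, mul_one]
  have h' : ∀ i, ∑ x, (starRingEnd ℂ) (Θ i) * Θ x * (starRingEnd ℂ) (Θ x) =
      (starRingEnd ℂ) (Θ i) := by
    intro i
    rw [show (∑ x, (starRingEnd ℂ) (Θ i) * Θ x * (starRingEnd ℂ) (Θ x))
        = (starRingEnd ℂ) (Θ i) * ∑ x, Θ x * (starRingEnd ℂ) (Θ x) by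
      rw [Finset.mul_sum]; exact Finset.sum_congr rfl fun k _ => by ring, h1, mul_one]
  rw [show (3:ℕ) = 2 + 1 by rfl, pow_succ, mE_sq hΘ]
  ext (i | i) (j | j) <;>
    simp [mE, Matrix.mul_apply, Matrix.fromBlocks, Fintype.sum_sum_type,
      Matrix.one_apply, Fin.eq_zero, h, h']

lemma mE_pow_odd (hΘ : dotc Θ Θ = 1) (k : ℕ) :
    (mE Θ) ^ (2 * k + 1) = ((-1 : ℝ) ^ k) • mE Θ := by
  induction k with
  | zero => simp
  | succ k ih =>
      have e : 2 * (k + 1) + 1 = (2 * k + 1) + 2 := by ring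
      have h3 : mE Θ * (mE Θ) ^ 2 = -(mE Θ) := by
        rw [← pow_succ', ← mE_cube hΘ]
      rw [e, pow_add, ih, smul_mul_assoc, ← pow_succ', show (2+1)=3 from rfl, mE_cube hΘ, smul_neg,
        ← neg_smul, pow_succ]
      congr 1
      ring

lemma mE_pow_even (hΘ : dotc Θ Θ = 1) (k : ℕ) :
    (mE Θ) ^ (2 * k + 2) = ((-1 : ℝ) ^ k) • (mE Θ) ^ 2 := by
  have e : 2 * k + 2 = (2 * k + 1) + 1 := by ring
  rw [e, pow_succ, mE_pow_odd hΘ k, Matrix.smul_mul, ← pow_two]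

set_option maxHeartbeats 1000000 in
theorem su_exp_formula' {N : ℕ} (θ : ℝ) (Θ : Fin N → ℂ) (hΘ : dotc Θ Θ = 1) :
    NormedSpace.exp (mE (θ • Θ))
      = ((1 - Real.cos θ) • (mE Θ) ^ 2 + 1) + Real.sin θ • mE Θ := by
  have hodd : HasSum (fun k => ((2 * k + 1).factorial : ℝ)⁻¹ • (θ • mE Θ) ^ (2 * k + 1))
      (Real.sin θ • mE Θ) := by
    have h := (Real.hasSum_sin θ).smul_const (mE Θ)
    have key : (fun k : ℕ => ((-1:ℝ) ^ k * θ ^ (2 * k + 1) / ((2 * k + 1).factorial : ℝ)) • mE Θ)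
        = fun k => ((2 * k + 1).factorial : ℝ)⁻¹ • (θ • mE Θ) ^ (2 * k + 1) := by
      funext k
      have hne : (((2 * k + 1).factorial : ℝ)) ≠ 0 := by positivity
      rw [smul_pow, mE_pow_odd hΘ k, smul_smul, smul_smul]
      congr 1
      field_simp
    exact key ▸ h
  have hcos : HasSum (fun k : ℕ => (-1:ℝ) ^ k * θ ^ (2 * k + 2) / ((2 * k + 2).factorial : ℝ))
      (1 - Real.cos θ) := by
    have h := Real.hasSum_cos θ
    have h2 : HasSum ((fun n : ℕ => (-1:ℝ) ^ n * θ ^ (2 * n) / ((2 * n).factorial : ℝ)) ∘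
        (· + 1)) (Real.cos θ - 1) := (hasSum_nat_add_iff
      (f := fun n : ℕ => (-1:ℝ) ^ n * θ ^ (2 * n) / ((2 * n).factorial : ℝ)) 1).mpr
      (by simpa using h)
    have h3 := h2.neg
    rw [neg_sub] at h3
    have key : (fun n : ℕ => -((-1:ℝ) ^ (n + 1) * θ ^ (2 * (n + 1)) / ((2 * (n + 1)).factorial : ℝ)))
        = fun k : ℕ => (-1:ℝ) ^ k * θ ^ (2 * k + 2) / ((2 * k + 2).factorial : ℝ) := by
      funext n
      have e : 2 * (n + 1) = 2 * n + 2 := by ring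
      rw [e]
      ring
    exact key ▸ h3
  have heven : HasSum (fun k => ((2 * k).factorial : ℝ)⁻¹ • (θ • mE Θ) ^ (2 * k))
      ((1 - Real.cos θ) • (mE Θ) ^ 2 + 1) := by
    have h2 : HasSum (fun k : ℕ => ((2 * (k + 1)).factorial : ℝ)⁻¹ • (θ • mE Θ) ^ (2 * (k + 1)))
        ((1 - Real.cos θ) • (mE Θ) ^ 2) := by
      have h := hcos.smul_const ((mE Θ) ^ 2)
      have key : (fun k : ℕ => ((-1:ℝ) ^ k * θ ^ (2 * k + 2) / ((2 * k + 2).factorial : ℝ)) • (mE Θ) ^ 2)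
          = fun k : ℕ => ((2 * (k + 1)).factorial : ℝ)⁻¹ • (θ • mE Θ) ^ (2 * (k + 1)) := by
        funext k
        have e : 2 * (k + 1) = 2 * k + 2 := by ring
        have hne : (((2 * k + 2).factorial : ℝ)) ≠ 0 := by positivity
        rw [e, smul_pow, mE_pow_even hΘ k, smul_smul, smul_smul]
        congr 1
        field_simp
      exact key ▸ h
    have h3 := (hasSum_nat_add_iff
      (f := fun k : ℕ => ((2 * k).factorial : ℝ)⁻¹ • (θ • mE Θ) ^ (2 * k)) 1).mp
      (by simpa [Nat.mul_succ] using h2)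
    simpa using h3
  have hsum : HasSum (fun n : ℕ => ((n.factorial : ℝ)⁻¹) • (θ • mE Θ) ^ n)
      (((1 - Real.cos θ) • (mE Θ) ^ 2 + 1) + Real.sin θ • mE Θ) :=
    HasSum.even_add_odd
      (f := fun n : ℕ => ((n.factorial : ℝ)⁻¹) • (θ • mE Θ) ^ n) heven hodd
  rw [mE_real_smul, NormedSpace.exp_eq_tsum (𝕂 := ℝ)]
  exact hsum.tsum_eq

end aux

/-- for a unit row vector `Θ ∈ ℂ^N` and `θ ∈ ℝ`, the matrix
exponential of `⟦θΘ⟧` is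
`[[cos θ, (sin θ)Θ],[−(sin θ)Θ̄ᵀ, I_N + (cos θ − 1)Θ̄ᵀΘ]]`. -/
theorem su_exp_formula {N : ℕ} (θ : ℝ) (Θ : Fin N → ℂ) (hΘ : dotc Θ Θ = 1) :
    NormedSpace.exp (mE (θ • Θ))
      = Matrix.fromBlocks
          (Matrix.of fun _ _ => (Real.cos θ : ℂ))
          (Matrix.of fun _ j => (Real.sin θ : ℂ) * Θ j)
          (Matrix.of fun i _ => -(Real.sin θ : ℂ) * (starRingEnd ℂ) (Θ i))
          ((1 : Matrix (Fin N) (Fin N) ℂ)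
            + ((Real.cos θ : ℂ) - 1) •
                Matrix.of fun j k => (starRingEnd ℂ) (Θ j) * Θ k) := by
  rw [su_exp_formula' θ Θ hΘ, mE_sq hΘ]
  ext (i | i) (j | j) <;>
    simp [mE, Matrix.fromBlocks, Matrix.one_apply, Matrix.add_apply, Matrix.smul_apply,
      Complex.real_smul, Fin.eq_zero] <;>
    ring_nf
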